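/- Let C be a tensor triangulated category with a weight structure w compatible with the tensor product, the tensor bifunctor being additive and triangulated in each variable. Fix morphisms u : M_- → M_+ and u' : M_-' → M_+' with M_-, M_-' ∈ C_{w≤0}, M_+, M_+' ∈ C_{w≥0}, and distinguished triangles exhibiting cones C₀[1] of u and C₀'[1] of u', with C₀ and C₀' both without weights -1 and 0. Let π₀ : M_- → Gr₀M_-, π₀' : M_-' → Gr₀M_-' and π₀^⊗ : M_- ⊗ M_-' → Gr₀(M_- ⊗ M_-') be the weight-0 quotients given by weight filtrations avoiding weight -1 (which exist by the main theorem, applied also to u ⊗ u'). Then Gr₀M_- ⊗ Gr₀M_-' lies in the heart C_{w=0}, and the unique morphism φ : Gr₀(M_- ⊗ M_-') → Gr₀M_- ⊗ Gr₀M_-' satisfying φ ∘ π₀^⊗ = π₀ ⊗ π₀' is an isomorphism. -/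

import Mathlib

open CategoryTheory CategoryTheory.Limits CategoryTheory.Pretriangulated

universe v u

/-- The shift `S[n]` of a class of objects `S`: the objects isomorphic to `A⟦n⟧`
for some `A ∈ S`. -/
def shiftedSet {C : Type u} [Category.{v} C] [HasShift C ℤ] (S : Set C) (n : ℤ) : Set C :=
  {X | ∃ A ∈ S, Nonempty (X ≅ A⟦n⟧)}

/-- A weight structure on a pretriangulated category `C`, following Bondarko. -/
structure WeightStructure (C : Type u) [Category.{v} C] [Preadditive C] [HasZeroObject C]
    [HasShift C ℤ] [∀ n : ℤ, (shiftFunctor C n).Additive] [Pretriangulated C] where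
  /-- the objects of weights `≤ 0` -/
  le : Set C
  /-- the objects of weights `≥ 0` -/
  ge : Set C
  /-- `C_{w ≤ 0}` is closed under retracts -/
  retract_le : ∀ (X M : C) (i : X ⟶ M) (r : M ⟶ X), i ≫ r = 𝟙 X → M ∈ le → X ∈ le
  /-- `C_{w ≥ 0}` is closed under retracts -/
  retract_ge : ∀ (X M : C) (i : X ⟶ M) (r : M ⟶ X), i ≫ r = 𝟙 X → M ∈ ge → X ∈ ge
  /-- `C_{w ≤ 0} ⊆ C_{w ≤ 1}` -/
  le_shift : le ⊆ shiftedSet le 1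
  /-- `C_{w ≥ 1} ⊆ C_{w ≥ 0}` -/
  ge_shift : shiftedSet ge 1 ⊆ ge
  /-- orthogonality -/
  orth : ∀ (M N : C), M ∈ le → N ∈ shiftedSet ge 1 → ∀ f : M ⟶ N, f = 0
  /-- existence of weight filtrations -/
  exists_wf : ∀ M : C, ∃ (A B : C) (a : A ⟶ M) (b : M ⟶ B) (δ : B ⟶ A⟦(1:ℤ)⟧),
    Triangle.mk a b δ ∈ (distTriang C) ∧ A ∈ le ∧ B ∈ shiftedSet ge 1

set_option linter.unusedSectionVars false

namespace WeightStructure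

variable {C : Type u} [Category.{v} C] [Preadditive C] [HasZeroObject C]
  [HasShift C ℤ] [∀ n : ℤ, (shiftFunctor C n).Additive] [Pretriangulated C]

/-- `C_{w ≤ n} := C_{w ≤ 0}[n]`. -/
def wLE (w : WeightStructure C) (n : ℤ) : Set C := shiftedSet w.le n

/-- `C_{w ≥ n} := C_{w ≥ 0}[n]`. -/
def wGE (w : WeightStructure C) (n : ℤ) : Set C := shiftedSet w.ge n

/-- The heart `C_{w = 0} := C_{w ≤ 0} ∩ C_{w ≥ 0}`. -/
def heart (w : WeightStructure C) : Set C := w.le ∩ w.ge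

/-- An object `M` is without weights `m, …, n` if it admits a weight filtration
avoiding these weights. -/
def WithoutWeights (w : WeightStructure C) (m n : ℤ) (M : C) : Prop :=
  ∃ (A B : C) (a : A ⟶ M) (b : M ⟶ B) (δ : B ⟶ A⟦(1:ℤ)⟧),
    Triangle.mk a b δ ∈ (distTriang C) ∧ A ∈ w.wLE (m - 1) ∧ B ∈ w.wGE (n + 1)

end WeightStructure

section Tensor

variable {C : Type u} [Category.{v} C] [Preadditive C] [HasZeroObject C]
  [HasShift C ℤ] [∀ n : ℤ, (shiftFunctor C n).Additive] [Pretriangulated C]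

/-- A tensor structure on `C` compatible with the triangulation: a bifunctor which is
additive and triangulated (commutes with the shift and preserves distinguished triangles)
in each variable. -/
structure TensorTriangulated (C : Type u) [Category.{v} C] [Preadditive C] [HasZeroObject C]
    [HasShift C ℤ] [∀ n : ℤ, (shiftFunctor C n).Additive] [Pretriangulated C] where
  /-- the tensor bifunctor -/
  T : C ⥤ C ⥤ C
  /-- additivity in the second variable -/
  addR : ∀ X : C, (T.obj X).Additive
  /-- additivity in the first variable -/
  addL : ∀ Y : C, (T.flip.obj Y).Additive
  /-- commutation with the shift in the second variable -/
  commR : ∀ X : C, (T.obj X).CommShift ℤ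
  /-- commutation with the shift in the first variable -/
  commL : ∀ Y : C, (T.flip.obj Y).CommShift ℤ
  /-- exactness in the second variable -/
  trR : ∀ (X A B Z : C) (f : A ⟶ B) (g : B ⟶ Z) (h : Z ⟶ A⟦(1:ℤ)⟧),
    Triangle.mk f g h ∈ (distTriang C) →
    Triangle.mk ((T.obj X).map f) ((T.obj X).map g)
      ((T.obj X).map h ≫ (@Functor.CommShift.commShiftIso _ _ _ _ (T.obj X) ℤ _ _ _ (commR X) (1:ℤ)).hom.app A) ∈ (distTriang C)
  /-- exactness in the first variable -/
  trL : ∀ (Y A B Z : C) (f : A ⟶ B) (g : B ⟶ Z) (h : Z ⟶ A⟦(1:ℤ)⟧),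
    Triangle.mk f g h ∈ (distTriang C) →
    Triangle.mk ((T.flip.obj Y).map f) ((T.flip.obj Y).map g)
      ((T.flip.obj Y).map h ≫ (@Functor.CommShift.commShiftIso _ _ _ _ (T.flip.obj Y) ℤ _ _ _ (commL Y) (1:ℤ)).hom.app A) ∈ (distTriang C)

/-- The tensor product of two morphisms. -/
def TensorTriangulated.tmul (𝒯 : TensorTriangulated C) {X X' Y Y' : C}
    (f : X ⟶ Y) (g : X' ⟶ Y') : (𝒯.T.obj X).obj X' ⟶ (𝒯.T.obj Y).obj Y' :=
  (𝒯.T.map f).app X' ≫ (𝒯.T.obj Y).map g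

/-- The weight structure `w` is compatible with the tensor structure `𝒯`. -/
def TensorTriangulated.Compatible (𝒯 : TensorTriangulated C) (w : WeightStructure C) : Prop :=
  (∀ X Y : C, X ∈ w.le → Y ∈ w.le → (𝒯.T.obj X).obj Y ∈ w.le) ∧
  (∀ X Y : C, X ∈ w.ge → Y ∈ w.ge → (𝒯.T.obj X).obj Y ∈ w.ge)

end Tensor

section Aux

namespace WeightStructure

variable {C : Type u} [Category.{v} C] [Preadditive C] [HasZeroObject C]
  [HasShift C ℤ] [∀ n : ℤ, (shiftFunctor C n).Additive] [Pretriangulated C]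
variable (w : WeightStructure C)

lemma mem_le_of_iso {X Y : C} (e : X ≅ Y) (h : Y ∈ w.le) : X ∈ w.le :=
  w.retract_le X Y e.hom e.inv e.hom_inv_id h

lemma mem_ge_of_iso {X Y : C} (e : X ≅ Y) (h : Y ∈ w.ge) : X ∈ w.ge :=
  w.retract_ge X Y e.hom e.inv e.hom_inv_id h

lemma le_shift_neg_one {X : C} (h : X ∈ w.le) : X⟦(-1:ℤ)⟧ ∈ w.le := by
  obtain ⟨A, hA, ⟨e⟩⟩ := w.le_shift h
  exact w.mem_le_of_iso (((shiftFunctor C (-1:ℤ)).mapIso e).trans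
    ((shiftFunctorCompIsoId C (1:ℤ) (-1:ℤ) (by ring)).app A)) hA

lemma shiftedSet_shift {S : Set C} {X : C} {m : ℤ} (k : ℤ) {n : ℤ} (h : X ∈ shiftedSet S m)
    (hn : m + k = n) : X⟦k⟧ ∈ shiftedSet S n := by
  obtain ⟨A, hA, ⟨e⟩⟩ := h
  exact ⟨A, hA, ⟨((shiftFunctor C k).mapIso e).trans ((shiftFunctorAdd' C m k n hn).symm.app A)⟩⟩

lemma zero_mem_le {X : C} (h : X ∈ shiftedSet w.le 0) : X ∈ w.le := by
  obtain ⟨A, hA, ⟨e⟩⟩ := h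
  exact w.mem_le_of_iso (e.trans ((shiftFunctorZero C ℤ).app A)) hA

lemma neg1_mem_le {X : C} (h : X ∈ shiftedSet w.le (-1)) : X ∈ w.le := by
  obtain ⟨A, hA, ⟨e⟩⟩ := h
  exact w.mem_le_of_iso e (w.le_shift_neg_one hA)

lemma neg2_sub_neg1 {X : C} (h : X ∈ shiftedSet w.le (-2)) : X ∈ shiftedSet w.le (-1) := by
  obtain ⟨A, hA, ⟨e⟩⟩ := h
  exact ⟨A⟦(-1:ℤ)⟧, w.le_shift_neg_one hA,
    ⟨e.trans ((shiftFunctorAdd' C (-1) (-1) (-2) (by ring)).app A)⟩⟩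

lemma hom_zero {X Y : C} (hX : X ∈ shiftedSet w.le (-1)) (hY : Y ∈ w.ge)
    (f : X ⟶ Y) : f = 0 := by
  obtain ⟨A, hA, ⟨e⟩⟩ := hX
  have h1 : ((shiftFunctorCompIsoId C (-1:ℤ) (1:ℤ) (by ring)).inv.app A ≫
      e.inv⟦(1:ℤ)⟧' ≫ f⟦(1:ℤ)⟧' : A ⟶ Y⟦(1:ℤ)⟧) = 0 :=
    w.orth _ _ hA ⟨Y, hY, ⟨Iso.refl _⟩⟩ _
  rw [Preadditive.IsIso.comp_left_eq_zero, Preadditive.IsIso.comp_left_eq_zero] at h1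
  exact (shiftFunctor C (1:ℤ)).map_injective (by rw [h1, Functor.map_zero])

lemma ext_le (T : Triangle C) (hT : T ∈ distTriang C)
    (h1 : T.obj₁ ∈ w.le) (h3 : T.obj₃ ∈ w.le) : T.obj₂ ∈ w.le := by
  obtain ⟨A, B, a, b, δ, hd, hA, hB⟩ := w.exists_wf T.obj₂
  have hb0 : T.mor₁ ≫ b = 0 := w.orth _ _ h1 hB _
  obtain ⟨c, hc⟩ := Triangle.yoneda_exact₂ T hT b hb0
  have hb : b = 0 := by rw [hc, w.orth _ _ h3 hB c, comp_zero]
  obtain ⟨r, hr⟩ := Triangle.coyoneda_exact₂ _ hd (𝟙 T.obj₂) (by change 𝟙 T.obj₂ ≫ b = 0; rw [Category.id_comp]; exact hb)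
  exact w.retract_le _ A r a hr.symm hA

lemma ext_neg1 (T : Triangle C) (hT : T ∈ distTriang C)
    (h1 : T.obj₁ ∈ shiftedSet w.le (-1)) (h3 : T.obj₃ ∈ shiftedSet w.le (-1)) :
    T.obj₂ ∈ shiftedSet w.le (-1) := by
  have hT3 := rot_of_distTriang _ (rot_of_distTriang _ (rot_of_distTriang _ hT))
  have h2 : T.obj₂⟦(1:ℤ)⟧ ∈ w.le :=
    w.ext_le _ hT3 (w.zero_mem_le (WeightStructure.shiftedSet_shift 1 h1 (by ring)))
      (w.zero_mem_le (WeightStructure.shiftedSet_shift 1 h3 (by ring)))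
  exact ⟨T.obj₂⟦(1:ℤ)⟧, h2,
    ⟨((shiftFunctorCompIsoId C (1:ℤ) (-1:ℤ) (by ring)).app T.obj₂).symm⟩⟩

lemma fac (T : Triangle C) (hT : T ∈ distTriang C)
    (h1 : T.obj₁ ∈ shiftedSet w.le (-2)) {H : C} (hH : H ∈ w.ge)
    (ψ : T.obj₂ ⟶ H) : ∃! φ : T.obj₃ ⟶ H, T.mor₂ ≫ φ = ψ := by
  have h0 : T.mor₁ ≫ ψ = 0 := w.hom_zero (w.neg2_sub_neg1 h1) hH _
  obtain ⟨φ, hφ⟩ := Triangle.yoneda_exact₂ T hT ψ h0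
  refine ⟨φ, hφ.symm, ?_⟩
  intro φ' hφ'
  have hd : T.mor₂ ≫ (φ' - φ) = 0 := by
    rw [Preadditive.comp_sub, hφ', ← hφ, sub_self]
  obtain ⟨g, hg⟩ := Triangle.yoneda_exact₂ _ (rot_of_distTriang _ hT) (φ' - φ) hd
  have hg0 : g = 0 := w.hom_zero (WeightStructure.shiftedSet_shift 1 h1 (by ring)) hH g
  have : φ' - φ = 0 := by rw [hg, hg0]; exact comp_zero
  exact sub_eq_zero.mp this

end WeightStructure

end Aux

/-- `Gr₀` is compatible with tensor products: the unique morphism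
`Gr₀(M₋ ⊗ M₋') ⟶ Gr₀ M₋ ⊗ Gr₀ M₋'` compatible with the weight-zero quotients is
an isomorphism (and `Gr₀ M₋ ⊗ Gr₀ M₋'` lies in the heart). -/
theorem gr0_tensor_iso
    {C : Type u} [Category.{v} C] [Preadditive C] [HasZeroObject C]
    [HasShift C ℤ] [∀ n : ℤ, (shiftFunctor C n).Additive] [Pretriangulated C]
    [IsTriangulated C]
    (𝒯 : TensorTriangulated C) (w : WeightStructure C) (hcomp : 𝒯.Compatible w)
    (Mm Mp Mm' Mp' C₀ C₀' : C)
    (u : Mm ⟶ Mp) (u' : Mm' ⟶ Mp')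
    (hMm : Mm ∈ w.le) (hMp : Mp ∈ w.ge) (hMm' : Mm' ∈ w.le) (hMp' : Mp' ∈ w.ge)
    (vm : C₀ ⟶ Mm) (vp : Mp ⟶ C₀⟦(1:ℤ)⟧)
    (hu : Triangle.mk vm u vp ∈ distTriang C)
    (vm' : C₀' ⟶ Mm') (vp' : Mp' ⟶ C₀'⟦(1:ℤ)⟧)
    (hu' : Triangle.mk vm' u' vp' ∈ distTriang C)
    (hC₀ : w.WithoutWeights (-1) 0 C₀) (hC₀' : w.WithoutWeights (-1) 0 C₀')
    -- a weight filtration of `M₋` avoiding weight `-1`, with quotient `π₀ : M₋ ⟶ G`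
    (A G : C) (aG : A ⟶ Mm) (π₀ : Mm ⟶ G) (δG : G ⟶ A⟦(1:ℤ)⟧)
    (hTG : Triangle.mk aG π₀ δG ∈ distTriang C)
    (hA : A ∈ w.wLE (-2)) (hG : G ∈ w.ge)
    -- a weight filtration of `M₋'` avoiding weight `-1`, with quotient `π₀' : M₋' ⟶ G'`
    (A' G' : C) (aG' : A' ⟶ Mm') (π₀' : Mm' ⟶ G') (δG' : G' ⟶ A'⟦(1:ℤ)⟧)
    (hTG' : Triangle.mk aG' π₀' δG' ∈ distTriang C)
    (hA' : A' ∈ w.wLE (-2)) (hG' : G' ∈ w.ge)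
    -- a weight filtration of `M₋ ⊗ M₋'` avoiding weight `-1`, with quotient `πt`
    (At Gt : C) (aGt : At ⟶ (𝒯.T.obj Mm).obj Mm')
    (πt : (𝒯.T.obj Mm).obj Mm' ⟶ Gt) (δGt : Gt ⟶ At⟦(1:ℤ)⟧)
    (hTGt : Triangle.mk aGt πt δGt ∈ distTriang C)
    (hAt : At ∈ w.wLE (-2)) (hGt : Gt ∈ w.ge) :
    (𝒯.T.obj G).obj G' ∈ w.heart ∧
    (∃! φ : Gt ⟶ (𝒯.T.obj G).obj G', πt ≫ φ = 𝒯.tmul π₀ π₀') ∧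
    (∀ φ : Gt ⟶ (𝒯.T.obj G).obj G', πt ≫ φ = 𝒯.tmul π₀ π₀' → IsIso φ) := by
  obtain ⟨A₀, hA₀, ⟨eA⟩⟩ := id hA
  obtain ⟨A₀', hA₀', ⟨eA'⟩⟩ := id hA'
  have hGle : G ∈ w.le :=
    w.ext_le _ (rot_of_distTriang _ hTG) hMm
      (w.neg1_mem_le (WeightStructure.shiftedSet_shift 1 hA (by ring)))
  have hG'le : G' ∈ w.le :=
    w.ext_le _ (rot_of_distTriang _ hTG') hMm'
      (w.neg1_mem_le (WeightStructure.shiftedSet_shift 1 hA' (by ring)))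
  have hHle : (𝒯.T.obj G).obj G' ∈ w.le := hcomp.1 G G' hGle hG'le
  have hHge : (𝒯.T.obj G).obj G' ∈ w.ge := hcomp.2 G G' hG hG'
  refine ⟨⟨hHle, hHge⟩,
    w.fac (Triangle.mk aGt πt δGt) hTGt hAt hHge (𝒯.tmul π₀ π₀'), ?_⟩
  intro φ hφ
  -- tensor the two weight filtrations
  have hTL := 𝒯.trL Mm' A Mm G aG π₀ δG hTG
  have hTR := 𝒯.trR G A' Mm' G' aG' π₀' δG' hTG'
  obtain ⟨Z, gZ, hZ, hZdist⟩ := distinguished_cocone_triangle (𝒯.tmul π₀ π₀')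
  have comm : (𝒯.T.flip.obj Mm').map π₀ ≫ (𝒯.T.obj G).map π₀' = 𝒯.tmul π₀ π₀' := rfl
  have O := Triangulated.someOctahedron comm (rot_of_distTriang _ hTL) (rot_of_distTriang _ hTR) hZdist
  have hAM : (𝒯.T.flip.obj Mm').obj A ∈ shiftedSet w.le (-2) :=
    ⟨(𝒯.T.obj A₀).obj Mm', hcomp.1 _ _ hA₀ hMm',
      ⟨((𝒯.T.flip.obj Mm').mapIso eA).trans ((@Functor.CommShift.commShiftIso _ _ _ _ (𝒯.T.flip.obj Mm') ℤ _ _ _ (𝒯.commL Mm') (-2:ℤ)).app A₀)⟩⟩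
  have hGA' : (𝒯.T.obj G).obj A' ∈ shiftedSet w.le (-2) :=
    ⟨(𝒯.T.obj G).obj A₀', hcomp.1 _ _ hGle hA₀',
      ⟨((𝒯.T.obj G).mapIso eA').trans ((@Functor.CommShift.commShiftIso _ _ _ _ (𝒯.T.obj G) ℤ _ _ _ (𝒯.commR G) (-2:ℤ)).app A₀')⟩⟩
  have hZ1 : Z ∈ shiftedSet w.le (-1) :=
    w.ext_neg1 _ O.mem
      (WeightStructure.shiftedSet_shift 1 hAM (by ring))
      (WeightStructure.shiftedSet_shift 1 hGA' (by ring))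
  have hT2 := inv_rot_of_distTriang _ hZdist
  have hF : (Triangle.mk (𝒯.tmul π₀ π₀') gZ hZ).invRotate.obj₁ ∈ shiftedSet w.le (-2) :=
    WeightStructure.shiftedSet_shift (-1) hZ1 (by ring)
  obtain ⟨φ', hφ'1, -⟩ : ∃! φ' : (𝒯.T.obj G).obj G' ⟶ Gt, 𝒯.tmul π₀ π₀' ≫ φ' = πt :=
    w.fac _ hT2 hF hGt πt
  have hφ'1' : 𝒯.tmul π₀ π₀' ≫ φ' = πt := hφ'1
  obtain ⟨χ, hχ, hχu⟩ := w.fac (Triangle.mk aGt πt δGt) hTGt hAt hGt πt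
  have h1 : φ ≫ φ' = 𝟙 Gt := by
    have e1 : πt ≫ (φ ≫ φ') = πt := by rw [← Category.assoc, hφ, hφ'1']
    have e2 : πt ≫ (𝟙 Gt) = πt := Category.comp_id _
    rw [hχu _ e1, hχu _ e2]
  obtain ⟨χ2, hχ2, hχ2u⟩ : ∃! χ : (𝒯.T.obj G).obj G' ⟶ (𝒯.T.obj G).obj G',
      𝒯.tmul π₀ π₀' ≫ χ = 𝒯.tmul π₀ π₀' := w.fac _ hT2 hF hHge (𝒯.tmul π₀ π₀')
  have h2 : φ' ≫ φ = 𝟙 ((𝒯.T.obj G).obj G') := by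
    have e1 : 𝒯.tmul π₀ π₀' ≫ (φ' ≫ φ) = 𝒯.tmul π₀ π₀' := by
      rw [← Category.assoc, hφ'1', hφ]
    have e2 : 𝒯.tmul π₀ π₀' ≫ 𝟙 ((𝒯.T.obj G).obj G') = 𝒯.tmul π₀ π₀' :=
      Category.comp_id _
    rw [hχ2u _ e1, hχ2u _ e2]
  exact ⟨φ', h1, h2⟩
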